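/- Let φ be a positive expansive continuous semiflow on a metric space (X,d). If x₀ is an end point of φ (i.e., O⁺(x₀)={x₀} but O⁻(x₀)≠{x₀}), then the tail O⁻(x₀) is an open subset of X. -/

import Mathlib

open scoped NNReal
open Filter Topology

def IsSemiflow {X : Type*} [TopologicalSpace X] (φ : X → ℝ≥0 → X) : Prop :=
  Continuous (fun p : X × ℝ≥0 => φ p.1 p.2) ∧
  (∀ x, φ x 0 = x) ∧
  (∀ x t s, φ (φ x t) s = φ x (t + s))

def Hplus (s : ℝ≥0 → ℝ≥0) : Prop :=
  Continuous s ∧ StrictMono s ∧ Function.Surjective s ∧ s 0 = 0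

/-- Expansiveness in the sense of Alves–Carvalho–Siqueira (with `H⁺`). -/
def Expansive {X : Type*} [MetricSpace X] (φ : X → ℝ≥0 → X) : Prop :=
  ∀ ε : ℝ, 0 < ε → ∃ δ : ℝ, 0 < δ ∧ ∀ x y : X, ∀ s : ℝ≥0 → ℝ≥0, Hplus s →
    (∀ t, dist (φ x t) (φ y (s t)) < δ) →
    ∃ t₀ : ℝ≥0, (t₀ : ℝ) < ε ∧ y = φ x t₀

/-- Positive expansiveness (symmetric version). -/
def PosExpansive {X : Type*} [MetricSpace X] (φ : X → ℝ≥0 → X) : Prop :=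
  ∀ ε : ℝ, 0 < ε → ∃ δ : ℝ, 0 < δ ∧ ∀ x y : X, ∀ s : ℝ≥0 → ℝ≥0, Hplus s →
    (∀ t, dist (φ x t) (φ y (s t)) < δ) →
    ∃ t₀ : ℝ≥0, (t₀ : ℝ) < ε ∧ (y = φ x t₀ ∨ x = φ y t₀)

def posOrbit {X : Type*} (φ : X → ℝ≥0 → X) (x : X) : Set X := Set.range (φ x)

def preOrbit {X : Type*} (φ : X → ℝ≥0 → X) (x : X) : Set X := {y | ∃ t, φ y t = x}

noncomputable def tau {X : Type*} (φ : X → ℝ≥0 → X) (x y : X) : ℝ≥0 :=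
  sInf {t : ℝ≥0 | φ y t = x}

def IsSingularity {X : Type*} (φ : X → ℝ≥0 → X) (x : X) : Prop :=
  posOrbit φ x = {x} ∧ preOrbit φ x = {x}

def IsEndPoint {X : Type*} (φ : X → ℝ≥0 → X) (x : X) : Prop :=
  posOrbit φ x = {x} ∧ preOrbit φ x ≠ {x}

def IsPeriodicPoint {X : Type*} (φ : X → ℝ≥0 → X) (x : X) : Prop :=
  (∃ t₀ : ℝ≥0, 0 < t₀ ∧ φ x t₀ = x) ∧ posOrbit φ x ≠ {x}

def Xtail {X : Type*} (φ : X → ℝ≥0 → X) : Set X :=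
  ⋃ x ∈ {x | IsEndPoint φ x}, preOrbit φ x

def Xsing {X : Type*} (φ : X → ℝ≥0 → X) : Set X := {x | IsSingularity φ x}

def limitSet {X : Type*} [TopologicalSpace X] (φ : X → ℝ≥0 → X) (y : X) : Set X :=
  {z | ∃ u : ℕ → ℝ≥0, Tendsto u atTop atTop ∧ Tendsto (fun n => φ y (u n)) atTop (𝓝 z)}


private lemma semiflow_fixed {X : Type*} (φ : X → ℝ≥0 → X) (x₀ : X)
    (h : posOrbit φ x₀ = {x₀}) : ∀ t, φ x₀ t = x₀ := by
  intro t
  have : φ x₀ t ∈ posOrbit φ x₀ := ⟨t, rfl⟩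
  rwa [h, Set.mem_singleton_iff] at this

private lemma periodic_bound {X : Type*} (φ : X → ℝ≥0 → X)
    (hsemi : ∀ x t s, φ (φ x t) s = φ x (t + s))
    (w : X) (q : ℝ≥0) (hq : 0 < q) (hper : φ w q = w) :
    ∀ t, ∃ r, r ≤ q ∧ φ w t = φ w r := by
  have key : ∀ n : ℕ, ∀ t, t ≤ n • q → ∃ r, r ≤ q ∧ φ w t = φ w r := by
    intro n
    induction n with
    | zero =>
      intro t ht
      simp only [zero_smul, nonpos_iff_eq_zero] at ht
      exact ⟨t, by simp [ht, hq.le], rfl⟩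
    | succ n ih =>
      intro t ht
      by_cases h1 : t ≤ q
      · exact ⟨t, h1, rfl⟩
      · push_neg at h1
        have hqt : q ≤ t := h1.le
        have h2 : t - q ≤ n • q := by
          rw [succ_nsmul] at ht
          exact tsub_le_iff_right.mpr ht
        obtain ⟨r, hr, hrt⟩ := ih (t - q) h2
        refine ⟨r, hr, ?_⟩
        have : φ w t = φ w (t - q) := by
          conv_lhs => rw [show t = q + (t - q) from (add_tsub_cancel_of_le hqt).symm]
          rw [← hsemi, hper]
        rw [this, hrt]
  intro t
  obtain ⟨n, hn⟩ := Archimedean.arch t hq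
  exact key n t hn

theorem stmt5 {X : Type*} [MetricSpace X] (φ : X → ℝ≥0 → X)
    (hφ : IsSemiflow φ) (hexp : PosExpansive φ)
    (x₀ : X) (hx₀ : IsEndPoint φ x₀) :
    IsOpen (preOrbit φ x₀) := by
  obtain ⟨hcont, hid, hsemi⟩ := hφ
  have hfix : ∀ t, φ x₀ t = x₀ := semiflow_fixed φ x₀ hx₀.1
  obtain ⟨δ, hδ, hexp1⟩ := hexp 1 one_pos
  -- tube lemma: an open set V ∋ x₀ whose points stay δ/2-close to x₀ for time ≤ 3
  obtain ⟨V, v, hVopen, hvopen, hx₀V, hIccv, hVv⟩ :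
      ∃ V v, IsOpen V ∧ IsOpen v ∧ {x₀} ⊆ V ∧ Set.Icc (0:ℝ≥0) 3 ⊆ v ∧
        V ×ˢ v ⊆ (fun p : X × ℝ≥0 => φ p.1 p.2) ⁻¹' Metric.ball x₀ (δ/2) := by
    apply generalized_tube_lemma isCompact_singleton isCompact_Icc
      (hcont.isOpen_preimage _ Metric.isOpen_ball)
    rintro ⟨a, t⟩ ⟨ha, _⟩
    simp only [Set.mem_singleton_iff] at ha
    subst ha
    simp [Set.mem_preimage, hfix, Metric.mem_ball, half_pos hδ]
  have hx₀V' : x₀ ∈ V := hx₀V rfl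
  have hV : ∀ z ∈ V, ∀ t : ℝ≥0, t ≤ 3 → dist (φ z t) x₀ < δ / 2 := by
    intro z hz t ht
    have : (z, t) ∈ V ×ˢ v := ⟨hz, hIccv ⟨zero_le, ht⟩⟩
    simpa [Metric.mem_ball, dist_comm] using hVv this
  -- the key: V ⊆ preOrbit φ x₀
  have hVpre : V ⊆ preOrbit φ x₀ := by
    intro z hz
    -- reparametrization
    set s : ℝ≥0 → ℝ≥0 := fun t => if t ≤ 1 then 2 * t else t + 1 with hs
    have hs1 : ∀ t : ℝ≥0, t ≤ 1 → s t = 2 * t := fun t ht => if_pos ht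
    have hs2 : ∀ t : ℝ≥0, ¬ t ≤ 1 → s t = t + 1 := fun t ht => if_neg ht
    have hHs : Hplus s := by
      refine ⟨?_, ?_, ?_, ?_⟩
      · apply Continuous.if_le (by continuity) (by continuity) continuous_id continuous_const
        intro a ha
        have ha' : a = 1 := ha
        rw [ha']; norm_num
      · intro a b hab
        by_cases hb : b ≤ 1
        · rw [hs1 a (hab.le.trans hb), hs1 b hb]
          exact mul_lt_mul_of_pos_left hab (by norm_num)
        · push_neg at hb
          rw [hs2 b (not_le.mpr hb)]
          by_cases ha : a ≤ 1
          · rw [hs1 a ha]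
            calc 2 * a ≤ 2 * 1 := mul_le_mul_of_nonneg_left ha zero_le
            _ = 1 + 1 := by norm_num
            _ < b + 1 := by exact add_lt_add_left hb 1
          · rw [hs2 a ha]
            exact add_lt_add_left hab 1
      · intro u
        by_cases hu : u ≤ 2
        · refine ⟨u / 2, ?_⟩
          have h1 : u / 2 ≤ 1 := by
            rw [div_le_iff₀ (by norm_num : (0:ℝ≥0) < 2)]; simpa using hu
          rw [hs1 _ h1, mul_comm, div_mul_cancel₀]; norm_num
        · push_neg at hu
          refine ⟨u - 1, ?_⟩
          have h1u : (1:ℝ≥0) ≤ u := le_trans (by norm_num) hu.le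
          have h2 : ¬ (u - 1 ≤ 1) := by
            rw [not_le]
            refine lt_tsub_of_add_lt_left ?_
            rw [one_add_one_eq_two]; exact hu
          rw [hs2 _ h2, tsub_add_cancel_of_le h1u]
      · simp [hs]
    -- first application of expansiveness: compare φ z 1 with z
    have hyp1 : ∀ t, dist (φ (φ z 1) t) (φ z (s t)) < δ := by
      intro t
      rw [hsemi]
      by_cases ht : t ≤ 1
      · rw [hs1 t ht]
        have b1 : dist (φ z (1 + t)) x₀ < δ / 2 := by
          apply hV z hz
          calc (1:ℝ≥0) + t ≤ 1 + 1 := add_le_add_right ht 1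
          _ ≤ 3 := by norm_num
        have b2 : dist (φ z (2 * t)) x₀ < δ / 2 := by
          apply hV z hz
          calc (2:ℝ≥0) * t ≤ 2 * 1 := mul_le_mul_of_nonneg_left ht zero_le
          _ ≤ 3 := by norm_num
        calc dist (φ z (1 + t)) (φ z (2 * t))
            ≤ dist (φ z (1 + t)) x₀ + dist (φ z (2 * t)) x₀ := dist_triangle_right _ _ _
        _ < δ / 2 + δ / 2 := add_lt_add b1 b2
        _ = δ := add_halves δ
      · rw [hs2 t ht, add_comm t 1, dist_self]
        exact hδ
    obtain ⟨t₀, ht₀, hcase⟩ := hexp1 (φ z 1) z s hHs hyp1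
    have ht₀le : t₀ ≤ 1 := by
      have : (t₀ : ℝ) ≤ ((1:ℝ≥0) : ℝ) := by push_cast; linarith
      exact_mod_cast this
    -- in either case, get an eventually periodic structure
    obtain ⟨w, t', q, hwz, hq, ht'q, hper⟩ :
        ∃ (w : X) (t' q : ℝ≥0), w = φ z t' ∧ 0 < q ∧ t' + q ≤ 2 ∧ φ w q = w := by
      rcases hcase with h | h
      · -- z = φ (φ z 1) t₀, i.e. z = φ z (1 + t₀)
        rw [hsemi] at h
        refine ⟨z, 0, 1 + t₀, (hid z).symm, by positivity, ?_, h.symm⟩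
        rw [zero_add]
        calc (1:ℝ≥0) + t₀ ≤ 1 + 1 := add_le_add_right ht₀le 1
        _ = 2 := one_add_one_eq_two
      · -- φ z 1 = φ z t₀
        have ht₀lt : t₀ < 1 := by
          have : (t₀ : ℝ) < ((1:ℝ≥0) : ℝ) := by push_cast; linarith
          exact_mod_cast this
        refine ⟨φ z t₀, t₀, 1 - t₀, rfl, tsub_pos_of_lt ht₀lt, ?_, ?_⟩
        · rw [add_tsub_cancel_of_le ht₀le]; norm_num
        · rw [hsemi, add_tsub_cancel_of_le ht₀le, h]
    -- the orbit of w stays within δ/2 of x₀ forever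
    have hwnear : ∀ t, dist (φ w t) x₀ < δ / 2 := by
      intro t
      obtain ⟨r, hr, hrt⟩ := periodic_bound φ hsemi w q hq hper t
      rw [hrt, hwz, hsemi]
      apply hV z hz
      calc t' + r ≤ t' + q := add_le_add_right hr t'
      _ ≤ 2 := ht'q
      _ ≤ 3 := by norm_num
    -- second application: compare x₀ with w
    have hyp2 : ∀ t, dist (φ x₀ t) (φ w (id t : ℝ≥0)) < δ := by
      intro t
      rw [hfix t, id]
      calc dist x₀ (φ w t) = dist (φ w t) x₀ := dist_comm _ _
      _ < δ / 2 := hwnear t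
      _ ≤ δ := half_le_self hδ.le
    obtain ⟨t₁, _, hcase2⟩ :=
      hexp1 x₀ w id ⟨continuous_id, strictMono_id, Function.surjective_id, rfl⟩ hyp2
    have hwx₀ : ∃ τ, φ w τ = x₀ := by
      rcases hcase2 with h | h
      · exact ⟨0, by rw [hid, h, hfix]⟩
      · exact ⟨t₁, h.symm⟩
    obtain ⟨τ, hτ⟩ := hwx₀
    exact ⟨t' + τ, by rw [← hsemi, ← hwz, hτ]⟩
  -- conclude openness
  rw [isOpen_iff_forall_mem_open]
  rintro y ⟨T, hT⟩
  refine ⟨(fun z => φ z T) ⁻¹' V, ?_, ?_, ?_⟩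
  · intro z hz
    obtain ⟨τ, hτ⟩ := hVpre hz
    exact ⟨T + τ, by rw [← hsemi]; exact hτ⟩
  · exact hVopen.preimage (hcont.comp (continuous_id.prodMk continuous_const))
  · simpa [Set.mem_preimage, hT] using hx₀V'
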